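/- Let f(y) = y + y²/2, let c₀ ∈ ℝ, and let u : ℝ → ℝ be bounded and continuous with u(a) = u(b) = c₀ for some a < b. Assume that f(u(x)) ≥ f(c₀) for every x ∈ [a,b], that f(u(x)) ≤ f(c₀) for every x ∉ [a,b], and that ∫_ℝ K(a−y)·(f(u(y)) − f(c₀)) dy ≤ ∫_ℝ K(b−y)·(f(u(y)) − f(c₀)) dy. Then u(x) = c₀ for every x ∈ ℝ. -/

import Mathlib

open MeasureTheory Real

/-- The kernel `K(x) = -sgn(x) e^{-|x|}/2`, the derivative of the Green's function
`G₂(x) = e^{-|x|}/2` of `1 - d²/dx²` on `ℝ`. -/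
noncomputable def bbmK (x : ℝ) : ℝ := -Real.sign x * Real.exp (-|x|) / 2

lemma measurable_bbmK : Measurable bbmK := by
  have hs : Measurable Real.sign := by
    unfold Real.sign
    exact Measurable.ite (measurableSet_lt measurable_id measurable_const) measurable_const
      (Measurable.ite (measurableSet_lt measurable_const measurable_id) measurable_const
        measurable_const)
  exact (hs.neg.mul (measurable_abs.neg.exp)).div_const 2

lemma bbmK_neg_of_pos {x : ℝ} (hx : 0 < x) : bbmK x < 0 := by
  unfold bbmK
  rw [Real.sign_of_pos hx]
  have := Real.exp_pos (-|x|)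
  nlinarith

lemma bbmK_pos_of_neg {x : ℝ} (hx : x < 0) : 0 < bbmK x := by
  unfold bbmK
  rw [Real.sign_of_neg hx]
  have := Real.exp_pos (-|x|)
  nlinarith

lemma bbmK_zero : bbmK 0 = 0 := by simp [bbmK]

lemma abs_bbmK_le (x : ℝ) : |bbmK x| ≤ Real.exp (-|x|) := by
  unfold bbmK
  rw [abs_div, abs_mul, abs_neg]
  have h1 : |Real.sign x| ≤ 1 := by
    rcases lt_trichotomy x 0 with h | h | h
    · rw [Real.sign_of_neg h]; norm_num
    · simp [h, Real.sign_zero]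
    · rw [Real.sign_of_pos h]; norm_num
  have h2 : |Real.exp (-|x|)| = Real.exp (-|x|) := abs_of_pos (Real.exp_pos _)
  rw [h2]
  have := Real.exp_pos (-|x|)
  rw [abs_of_pos (by norm_num : (0:ℝ) < 2)]
  nlinarith

lemma integrable_exp_neg_abs_sub (c : ℝ) :
    Integrable (fun y : ℝ => Real.exp (-|y - c|)) := by
  have h1 : IntegrableOn (fun y : ℝ => Real.exp (-|y - c|)) (Set.Iic c) := by
    have : IntegrableOn (fun y : ℝ => Real.exp y * Real.exp (-c)) (Set.Iic c) :=
      (integrableOn_exp_Iic c).mul_const _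
    refine this.congr_fun (fun y hy => ?_) measurableSet_Iic
    dsimp only; rw [← Real.exp_add]
    congr 1
    rw [abs_of_nonpos (by simp at hy; linarith)]
    ring
  have h2 : IntegrableOn (fun y : ℝ => Real.exp (-|y - c|)) (Set.Ioi c) := by
    have : IntegrableOn (fun y : ℝ => Real.exp c * Real.exp (-(1 : ℝ) * y)) (Set.Ioi c) :=
      (exp_neg_integrableOn_Ioi c one_pos).const_mul _
    refine this.congr_fun (fun y hy => ?_) measurableSet_Ioi
    dsimp only; rw [← Real.exp_add]
    congr 1
    rw [abs_of_pos (by simp at hy; linarith)]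
    ring
  have := h1.union h2
  rwa [Set.Iic_union_Ioi, integrableOn_univ] at this


/-- General unique continuation at a time slice, second sign configuration, with
`f(y) = y + y²/2`: if `u(a) = u(b) = c₀`, `f(u) ≥ f(c₀)` on `[a,b]`, `f(u) ≤ f(c₀)` outside
`[a,b]`, and `∫ K(a-y)(f(u)-f(c₀)) dy ≤ ∫ K(b-y)(f(u)-f(c₀)) dy`, then `u ≡ c₀`. -/
theorem bbm_unique_continuation_general_second (c₀ : ℝ) (u : ℝ → ℝ)
    (hbdd : ∃ C : ℝ, ∀ x, |u x| ≤ C) (hcont : Continuous u)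
    (a b : ℝ) (hab : a < b) (hua : u a = c₀) (hub : u b = c₀)
    (hin : ∀ x ∈ Set.Icc a b, c₀ + c₀ ^ 2 / 2 ≤ u x + u x ^ 2 / 2)
    (hout : ∀ x ∉ Set.Icc a b, u x + u x ^ 2 / 2 ≤ c₀ + c₀ ^ 2 / 2)
    (hineq : (∫ y : ℝ, bbmK (a - y) * ((u y + u y ^ 2 / 2) - (c₀ + c₀ ^ 2 / 2))) ≤
      ∫ y : ℝ, bbmK (b - y) * ((u y + u y ^ 2 / 2) - (c₀ + c₀ ^ 2 / 2))) :
    ∀ x : ℝ, u x = c₀ := by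
  obtain ⟨C, hC⟩ := hbdd
  set g : ℝ → ℝ := fun y => (u y + u y ^ 2 / 2) - (c₀ + c₀ ^ 2 / 2) with hg
  have hgcont : Continuous g := by
    apply Continuous.sub _ continuous_const
    exact hcont.add ((hcont.pow 2).div_const 2)
  have hgbdd : ∀ y, |g y| ≤ C + C ^ 2 / 2 + |c₀| + c₀ ^ 2 / 2 := by
    intro y
    have h1 := abs_le.mp (hC y)
    have h2 : u y ^ 2 ≤ C ^ 2 := by nlinarith [abs_nonneg (u y), sq_abs (u y), hC y]
    have h3 := le_abs_self c₀
    have h4 := neg_abs_le c₀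
    have h5 := sq_nonneg c₀
    have h6 := sq_nonneg (u y)
    rw [abs_le]
    constructor <;> simp only [hg] <;> nlinarith
  set M := C + C ^ 2 / 2 + |c₀| + c₀ ^ 2 / 2 with hM
  have hMnn : 0 ≤ M := le_trans (abs_nonneg _) (hgbdd a)
  -- integrability
  have hint : ∀ c : ℝ, Integrable (fun y => bbmK (c - y) * g y) := by
    intro c
    have hmeas : AEStronglyMeasurable (fun y => bbmK (c - y) * g y) volume := by
      apply AEStronglyMeasurable.mul
      · exact (measurable_bbmK.comp (measurable_const.sub measurable_id)).aestronglyMeasurable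
      · exact hgcont.aestronglyMeasurable
    have hdom : Integrable (fun y : ℝ => M * Real.exp (-|y - c|)) :=
      (integrable_exp_neg_abs_sub c).const_mul M
    refine hdom.mono hmeas (Filter.Eventually.of_forall fun y => ?_)
    rw [norm_mul]
    have h1 : ‖bbmK (c - y)‖ ≤ Real.exp (-|y - c|) := by
      rw [Real.norm_eq_abs]
      have := abs_bbmK_le (c - y)
      rwa [show |c - y| = |y - c| from abs_sub_comm c y] at this
    have h2 : ‖g y‖ ≤ M := hgbdd y
    have hrhs : ‖M * Real.exp (-|y - c|)‖ = M * Real.exp (-|y - c|) := by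
      rw [Real.norm_eq_abs, abs_of_nonneg (by positivity)]
    rw [hrhs]
    calc ‖bbmK (c - y)‖ * ‖g y‖ ≤ Real.exp (-|y - c|) * M :=
        mul_le_mul h1 h2 (norm_nonneg _) (Real.exp_pos _).le
      _ = M * Real.exp (-|y - c|) := mul_comm _ _
  -- w y := bbmK (b - y) - bbmK (a - y)
  set w : ℝ → ℝ := fun y => bbmK (b - y) - bbmK (a - y) with hw
  have hw_in : ∀ y ∈ Set.Icc a b, w y < 0 := by
    rintro y ⟨hy1, hy2⟩
    have h1 : bbmK (b - y) ≤ 0 := by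
      rcases lt_or_eq_of_le hy2 with h | h
      · exact (bbmK_neg_of_pos (by linarith)).le
      · simp [h, bbmK_zero]
    have h2 : 0 ≤ bbmK (a - y) := by
      rcases lt_or_eq_of_le hy1 with h | h
      · exact (bbmK_pos_of_neg (by linarith)).le
      · simp [← h, bbmK_zero]
    rcases lt_or_eq_of_le hy2 with h | h
    · have := bbmK_neg_of_pos (show (0:ℝ) < b - y by linarith)
      simp only [hw]; linarith
    · have := bbmK_pos_of_neg (show a - y < 0 by linarith)
      simp only [hw]; linarith
  have hw_out : ∀ y, y ∉ Set.Icc a b → 0 < w y := by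
    intro y hy
    rw [Set.mem_Icc, not_and_or, not_le, not_le] at hy
    rcases hy with h | h
    · -- y < a < b : both args positive
      have h1 := bbmK_neg_of_pos (show (0:ℝ) < a - y by linarith)
      have h2 := bbmK_neg_of_pos (show (0:ℝ) < b - y by linarith)
      -- need bbmK(b-y) > bbmK(a-y): -exp(y-b)/2 > -exp(y-a)/2
      have e1 : bbmK (a - y) = -Real.exp (-(a - y)) / 2 := by
        unfold bbmK; rw [Real.sign_of_pos (by linarith), abs_of_pos (by linarith)]; ring
      have e2 : bbmK (b - y) = -Real.exp (-(b - y)) / 2 := by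
        unfold bbmK; rw [Real.sign_of_pos (by linarith), abs_of_pos (by linarith)]; ring
      simp only [hw, e1, e2]
      have := Real.exp_lt_exp.mpr (show -(b - y) < -(a - y) by linarith)
      linarith
    · -- b < y : both args negative
      have e1 : bbmK (a - y) = Real.exp (a - y) / 2 := by
        unfold bbmK; rw [Real.sign_of_neg (by linarith), abs_of_neg (by linarith)]; ring_nf
      have e2 : bbmK (b - y) = Real.exp (b - y) / 2 := by
        unfold bbmK; rw [Real.sign_of_neg (by linarith), abs_of_neg (by linarith)]; ring_nf
      simp only [hw, e1, e2]
      have := Real.exp_lt_exp.mpr (show a - y < b - y by linarith)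
      linarith
  -- pointwise nonpositivity
  have hpt : ∀ y, w y * g y ≤ 0 := by
    intro y
    by_cases hy : y ∈ Set.Icc a b
    · exact mul_nonpos_of_nonpos_of_nonneg (hw_in y hy).le (by simpa [hg] using sub_nonneg.mpr (hin y hy))
    · exact mul_nonpos_of_nonneg_of_nonpos (hw_out y hy).le (by simpa [hg] using sub_nonpos.mpr (hout y hy))
  have hIntw : Integrable (fun y => w y * g y) := by
    have := (hint b).sub (hint a)
    refine this.congr (Filter.Eventually.of_forall fun y => ?_)
    simp only [Pi.sub_apply, hw]; ring
  have hsum : (∫ y : ℝ, w y * g y) = (∫ y : ℝ, bbmK (b - y) * g y) - ∫ y : ℝ, bbmK (a - y) * g y := by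
    rw [← integral_sub (hint b) (hint a)]
    congr 1; funext y; simp only [hw]; ring
  have hge : 0 ≤ ∫ y : ℝ, w y * g y := by
    rw [hsum]; simp only [hg]; linarith [hineq]
  have hle : (∫ y : ℝ, w y * g y) ≤ 0 := integral_nonpos hpt
  have hzero : (∫ y : ℝ, -(w y * g y)) = 0 := by
    rw [integral_neg]; linarith
  have haezero : (fun y => -(w y * g y)) =ᵐ[volume] 0 := by
    have := (integral_eq_zero_iff_of_nonneg (f := fun y => -(w y * g y))
      (fun y => by simpa using hpt y) hIntw.neg).mp hzero
    exact this
  have hgae : g =ᵐ[volume] (fun _ => 0) := by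
    filter_upwards [haezero] with y hy
    simp only [Pi.zero_apply, neg_eq_zero] at hy
    have hwne : w y ≠ 0 := by
      by_cases hmem : y ∈ Set.Icc a b
      · exact (hw_in y hmem).ne
      · exact (hw_out y hmem).ne'
    exact (mul_eq_zero.mp hy).resolve_left hwne
  have hgzero : ∀ y, g y = 0 := by
    have := (hgcont.ae_eq_iff_eq volume continuous_const).mp hgae
    intro y; exact congrFun this y
  -- final step: u y ∈ {c₀, -2 - c₀}, connectedness/IVT
  intro x
  by_contra hne
  have hx : u x = -2 - c₀ := by
    have h := hgzero x
    simp only [hg] at h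
    have : (u x - c₀) * (u x + c₀ + 2) = 0 := by nlinarith
    rcases mul_eq_zero.mp this with h' | h'
    · exact absurd (by linarith) hne
    · linarith
  have hc : c₀ ≠ -1 := by
    intro h; apply hne; rw [hx, h]; norm_num
  -- -1 is strictly between u a = c₀ and u x = -2 - c₀
  have hmem : (-1 : ℝ) ∈ Set.uIcc (u a) (u x) := by
    rw [hua, hx, Set.mem_uIcc]
    rcases lt_or_gt_of_ne hc with h | h
    · left; constructor <;> linarith
    · right; constructor <;> linarith
  obtain ⟨z, _, hz⟩ := intermediate_value_uIcc (hcont.continuousOn (s := Set.uIcc a x)) hmem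
  have h := hgzero z
  simp only [hg] at h
  have h2 : (u z - c₀) * (u z + c₀ + 2) = 0 := by nlinarith
  rcases mul_eq_zero.mp h2 with h' | h'
  · rw [hz] at h'; apply hc; linarith
  · rw [hz] at h'; apply hc; linarith
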